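/- Let n ≥ 2 and r ≥ 1 be integers. Let p_0, p_1, …, p_r be diagonal n×n complex matrices such that the diagonal entries of p_0 are pairwise distinct. Suppose ω_0, ω_1, …, ω_r are n×n complex matrices satisfying Σ_{j=0}^{k} [p_j, ω_{k−j}] = 0 for every 0 ≤ k ≤ r−1 and Σ_{j=0}^{r} [p_j, ω_{r−j}] = (r+1)·ω_0. Then ω_0 = 0 and ω_k is a diagonal matrix for every 0 ≤ k ≤ r. -/
import Mathlib

lemma diag_comm_zero {n : ℕ} {P A : Matrix (Fin n) (Fin n) ℂ}
    (hP : P.IsDiag) (hA : A.IsDiag) : P * A - A * P = 0 := by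
  rw [← hP.diagonal_diag, ← hA.diagonal_diag, Matrix.diagonal_mul_diagonal,
    Matrix.diagonal_mul_diagonal]
  simp [mul_comm]

lemma comm_entry {n : ℕ} {P A : Matrix (Fin n) (Fin n) ℂ}
    (hP : P.IsDiag) (a b : Fin n) :
    (P * A - A * P) a b = (P a a - P b b) * A a b := by
  rw [← hP.diagonal_diag]
  simp [Matrix.sub_apply, Matrix.diagonal_mul, Matrix.mul_diagonal]
  ring

/-- The inductive content of the proof of Lemma 1 of the paper: if the diagonal
matrices `p 0, …, p r` (with `p 0` having pairwise distinct diagonal entries) and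
arbitrary matrices `ω 0, …, ω r` satisfy `∑_{j≤k} [p j, ω (k-j)] = 0` for `k < r`
and `∑_{j≤r} [p j, ω (r-j)] = (r+1) ω 0`, then `ω 0 = 0` and each `ω k` is diagonal. -/
theorem stmt1 (n r : ℕ) (hn : 2 ≤ n) (hr : 1 ≤ r)
    (p ω : ℕ → Matrix (Fin n) (Fin n) ℂ)
    (hpdiag : ∀ j, j ≤ r → (p j).IsDiag)
    (hpdist : ∀ a b : Fin n, a ≠ b → p 0 a a ≠ p 0 b b)
    (hlow : ∀ k, k < r →
      ∑ j ∈ Finset.range (k + 1), (p j * ω (k - j) - ω (k - j) * p j) = 0)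
    (htop : ∑ j ∈ Finset.range (r + 1), (p j * ω (r - j) - ω (r - j) * p j)
      = ((r : ℂ) + 1) • ω 0) :
    ω 0 = 0 ∧ ∀ k, k ≤ r → (ω k).IsDiag := by
  have key : ∀ A : Matrix (Fin n) (Fin n) ℂ, p 0 * A - A * p 0 = 0 → A.IsDiag := by
    intro A hA i j hij
    have h := congrFun (congrFun hA i) j
    rw [comm_entry (hpdiag 0 (by omega)) i j] at h
    simp only [Matrix.zero_apply] at h
    rcases mul_eq_zero.mp h with h1 | h1
    · exact absurd (sub_eq_zero.mp h1) (hpdist i j hij)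
    · exact h1
  have hdiag : ∀ k, k < r → (ω k).IsDiag := by
    intro k
    induction k using Nat.strong_induction_on with
    | _ k ih =>
      intro hk
      have h := hlow k hk
      rw [Finset.sum_range_succ'] at h
      have hz : ∀ j ∈ Finset.range k,
          (p (j + 1) * ω (k - (j + 1)) - ω (k - (j + 1)) * p (j + 1)) = 0 := by
        intro j hj
        simp only [Finset.mem_range] at hj
        exact diag_comm_zero (hpdiag (j + 1) (by omega)) (ih (k - (j + 1)) (by omega) (by omega))
      rw [Finset.sum_eq_zero hz, zero_add] at h
      simpa using key _ h
  have htop' := htop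
  rw [Finset.sum_range_succ'] at htop'
  have hz : ∀ j ∈ Finset.range r,
      (p (j + 1) * ω (r - (j + 1)) - ω (r - (j + 1)) * p (j + 1)) = 0 := by
    intro j hj
    simp only [Finset.mem_range] at hj
    exact diag_comm_zero (hpdiag (j + 1) (by omega)) (hdiag (r - (j + 1)) (by omega))
  rw [Finset.sum_eq_zero hz, zero_add, Nat.sub_zero] at htop'
  have hw0 : ω 0 = 0 := by
    ext i j
    by_cases hij : i = j
    · subst hij
      have h := congrFun (congrFun htop' i) i
      rw [comm_entry (hpdiag 0 (by omega)) i i] at h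
      simp only [sub_self, zero_mul, Matrix.smul_apply, smul_eq_mul] at h
      have hne : (r : ℂ) + 1 ≠ 0 := by
        exact Nat.cast_add_one_ne_zero r
      simpa [Matrix.zero_apply] using (mul_eq_zero.mp h.symm).resolve_left hne
    · simpa using hdiag 0 (by omega) hij
  constructor
  · exact hw0
  · intro k hk
    rcases lt_or_eq_of_le hk with h | h
    · exact hdiag k h
    · subst h
      apply key
      rw [htop', hw0, smul_zero]
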